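/- (Uncontrolled motion under EIC-based control.) Let m < n, let U be an m × m real orthogonal matrix, V an n × n real orthogonal matrix, Λ⁺ the n × m matrix whose top m × m block is diag(1/σ₁, …, 1/σ_m) with all σᵢ > 0 and whose bottom (n−m) × m block is zero. Suppose q_a : ℝ → ℝⁿ is twice differentiable and satisfies q̈_a(t) = −V Λ⁺ Uᵀ w(t) for all t, for some function w : ℝ → ℝᵐ. Define p_a(t) := Vᵀ q_a(t). Then for every index j with m < j ≤ n, the j-th component of p_a has identically zero second derivative; consequently p_{a,j}(t) = p_{a,j}(0) + t · ṗ_{a,j}(0) for all t, i.e. the motion of these coordinates is unaffected by w. -/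

import Mathlib

open Matrix

/-- (Uncontrolled motion under EIC-based control.)  Let `m < n`, `U` an
`m × m` orthogonal matrix, `V` an `n × n` orthogonal matrix, and `Λ⁺` the `n × m` matrix
whose top `m × m` block is `diag(1/σ₁, …, 1/σ_m)` (all `σᵢ > 0`) and whose bottom
`(n−m) × m` block is zero.  If `q_a : ℝ → ℝⁿ` is twice differentiable with
`q̈_a(t) = −V Λ⁺ Uᵀ w(t)` for all `t`, and `p_a(t) := Vᵀ q_a(t)`, then for every index
`j` with `m ≤ j` (0-based, i.e. `m < j ≤ n` in 1-based indexing) the `j`-th component of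
`p_a` has identically zero second derivative, and consequently
`p_{a,j}(t) = p_{a,j}(0) + t ṗ_{a,j}(0)` for all `t`. -/
theorem stmt_2 (m n : ℕ) (hmn : m < n)
    (U : Matrix (Fin m) (Fin m) ℝ) (V : Matrix (Fin n) (Fin n) ℝ)
    (hU : Uᵀ * U = 1) (hV : Vᵀ * V = 1)
    (σ : Fin m → ℝ) (hσ : ∀ i, 0 < σ i)
    (Λp : Matrix (Fin n) (Fin m) ℝ)
    (hΛp : ∀ (i : Fin n) (j : Fin m), Λp i j = if (i : ℕ) = (j : ℕ) then (σ j)⁻¹ else 0)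
    (qa : ℝ → (Fin n → ℝ)) (w : ℝ → (Fin m → ℝ))
    (hqa : Differentiable ℝ qa) (hqa' : Differentiable ℝ (deriv qa))
    (hode : ∀ t : ℝ, deriv (deriv qa) t = -(V * Λp * Uᵀ).mulVec (w t)) :
    ∀ j : Fin n, m ≤ (j : ℕ) →
      (∀ t : ℝ, deriv (deriv (fun s => Vᵀ.mulVec (qa s) j)) t = 0) ∧
      (∀ t : ℝ, Vᵀ.mulVec (qa t) j =
        Vᵀ.mulVec (qa 0) j + t * deriv (fun s => Vᵀ.mulVec (qa s) j) 0) := by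
  intro j hj
  -- f is the j-th component of p_a
  set f : ℝ → ℝ := fun s => Vᵀ.mulVec (qa s) j with hf
  have hfeq : ∀ s, f s = ∑ i, Vᵀ j i * qa s i := by
    intro s; simp [hf, Matrix.mulVec, dotProduct]
  -- first derivative
  have hd1 : ∀ t, HasDerivAt f (∑ i, Vᵀ j i * deriv qa t i) t := by
    intro t
    have : HasDerivAt (fun s => ∑ i, Vᵀ j i * qa s i)
        (∑ i, Vᵀ j i * deriv qa t i) t := by
      apply HasDerivAt.fun_sum
      intro i _
      exact ((hasDerivAt_pi.1 (hqa t).hasDerivAt) i).const_mul _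
    exact this.congr_deriv rfl |>.congr_of_eventuallyEq
      (Filter.Eventually.of_forall fun s => (hfeq s))
  have hderiv1 : ∀ t, deriv f t = ∑ i, Vᵀ j i * deriv qa t i :=
    fun t => (hd1 t).deriv
  -- second derivative
  have hd2 : ∀ t, HasDerivAt (deriv f) (∑ i, Vᵀ j i * deriv (deriv qa) t i) t := by
    intro t
    have : HasDerivAt (fun s => ∑ i, Vᵀ j i * deriv qa s i)
        (∑ i, Vᵀ j i * deriv (deriv qa) t i) t := by
      apply HasDerivAt.fun_sum
      intro i _
      exact ((hasDerivAt_pi.1 (hqa' t).hasDerivAt) i).const_mul _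
    exact this.congr_of_eventuallyEq
      (Filter.Eventually.of_forall fun s => (hderiv1 s))
  -- the j-th row of Λp vanishes since j ≥ m
  have hrow : ∀ k : Fin m, Λp j k = 0 := by
    intro k
    rw [hΛp]
    have : (j : ℕ) ≠ (k : ℕ) := by omega
    simp [this]
  -- the sum defining the second derivative is zero
  have hsum : ∀ t, (∑ i, Vᵀ j i * deriv (deriv qa) t i) = 0 := by
    intro t
    rw [hode t]
    have h1 : (∑ i, Vᵀ j i * (-(V * Λp * Uᵀ).mulVec (w t)) i)
        = Vᵀ.mulVec (-(V * Λp * Uᵀ).mulVec (w t)) j := by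
      simp [Matrix.mulVec, dotProduct]
    rw [h1, Matrix.mulVec_neg, Matrix.mulVec_mulVec]
    have h2 : Vᵀ * (V * Λp * Uᵀ) = Λp * Uᵀ := by
      rw [← Matrix.mul_assoc, ← Matrix.mul_assoc, hV, Matrix.one_mul]
    rw [h2]
    have h3 : ∀ k : Fin m, (Λp * Uᵀ) j k = 0 := by
      intro k
      simp [Matrix.mul_apply, hrow]
    simp [Matrix.mulVec, dotProduct, h3]
  have hzero : ∀ t, deriv (deriv f) t = 0 := by
    intro t
    rw [(hd2 t).deriv, hsum t]
  refine ⟨hzero, ?_⟩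
  -- deriv f is constant
  have hdf_diff : Differentiable ℝ (deriv f) := fun t => (hd2 t).differentiableAt
  have hconst : ∀ t, deriv f t = deriv f 0 := by
    intro t
    exact is_const_of_deriv_eq_zero hdf_diff hzero t 0
  -- g t = f t - t * deriv f 0 has zero derivative
  have hg : ∀ t, HasDerivAt (fun s => f s - s * deriv f 0) 0 t := by
    intro t
    have h1 : HasDerivAt f (deriv f 0) t := by
      have := (hd1 t)
      rwa [← hderiv1 t, hconst t] at this
    have h2 : HasDerivAt (fun s : ℝ => s * deriv f 0) (deriv f 0) t := by
      simpa using (hasDerivAt_id t).mul_const (deriv f 0)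
    exact (h1.sub h2).congr_deriv (sub_self _)
  have hgc : ∀ t, f t - t * deriv f 0 = f 0 - 0 * deriv f 0 := by
    intro t
    exact is_const_of_deriv_eq_zero (fun s => (hg s).differentiableAt)
      (fun s => (hg s).deriv) t 0
  intro t
  have := hgc t
  simp only [zero_mul, sub_zero] at this
  have : f t = f 0 + t * deriv f 0 := by linarith
  simpa [hf] using this
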